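/- Fix a ∈ 𝒜 with P(Y⁰=1, A=a) > 0, and assume consistency (P-almost surely, if D = 0 then Y = Y⁰), ignorability (for all a' ∈ 𝒜, x ∈ 𝒳, and s, y, d ∈ {0,1} with P(A=a', X=x, S=s) > 0, P(Y⁰=y, D=d | A=a', X=x, S=s) = P(Y⁰=y | A=a', X=x, S=s) · P(D=d | A=a', X=x, S=s)), and positivity (P(D=0, A=a', X=x, S=s) > 0 whenever P(A=a', X=x, S=s) > 0). Then the group-specific counterfactual false negative rate is identified by the group-restricted inverse-probability-weighted ratio: P(S=0 | Y⁰=1, A=a) = E[ 1{D=0} · 1{S=0} · 1{Y=1} · 1{A=a} / (1 − π(A,X,S)) ] / E[ 1{D=0} · 1{Y=1} · 1{A=a} / (1 − π(A,X,S)) ], where the denominator is strictly positive since it equals P(Y⁰=1, A=a). -/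

import Mathlib

open MeasureTheory

/-- `pr P E` is the probability of the event `E` as a real number. -/
noncomputable def pr {Ω : Type*} [MeasurableSpace Ω] (P : Measure Ω) (E : Set Ω) : ℝ :=
  (P E).toReal

/-- `cpr P E F = P(E | F) = P(E ∩ F) / P(F)`, the conditional probability of `E` given `F`. -/
noncomputable def cpr {Ω : Type*} [MeasurableSpace Ω] (P : Measure Ω) (E F : Set Ω) : ℝ :=
  pr P (E ∩ F) / pr P F

lemma pr_nonneg {Ω : Type*} [MeasurableSpace Ω] (P : Measure Ω) (E : Set Ω) : 0 ≤ pr P E :=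
  ENNReal.toReal_nonneg

lemma pr_meas_eq_zero {Ω : Type*} [MeasurableSpace Ω] (P : Measure Ω) [IsFiniteMeasure P]
    {F : Set Ω} (hF : pr P F = 0) : P F = 0 := by
  rcases (ENNReal.toReal_eq_zero_iff _).1 hF with h | h
  · exact h
  · exact absurd h (measure_ne_top P F)

lemma pr_zero_of_subset {Ω : Type*} [MeasurableSpace Ω] (P : Measure Ω) [IsFiniteMeasure P]
    {E F : Set Ω} (h : E ⊆ F) (hF : pr P F = 0) : pr P E = 0 := by
  rw [pr, measure_mono_null h (pr_meas_eq_zero P hF), ENNReal.toReal_zero]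

lemma pr_partition {Ω ι : Type*} [MeasurableSpace Ω] [MeasurableSpace ι]
    [MeasurableSingletonClass ι] [Countable ι]
    (P : Measure Ω) [IsFiniteMeasure P] {E : Set Ω} (hE : MeasurableSet E)
    {f : Ω → ι} (hf : Measurable f) :
    pr P E = ∑' i, pr P (E ∩ {ω | f ω = i}) := by
  have h1 : E = ⋃ i, E ∩ {ω | f ω = i} := by
    ext ω
    simp only [Set.mem_iUnion, Set.mem_inter_iff, Set.mem_setOf_eq]
    exact ⟨fun h => ⟨f ω, h, rfl⟩, fun ⟨i, h, _⟩ => h⟩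
  have h2 : P E = ∑' i, P (E ∩ {ω | f ω = i}) := by
    conv_lhs => rw [h1]
    refine measure_iUnion ?_ ?_
    · intro i j hij
      refine Set.disjoint_left.2 ?_
      rintro ω ⟨-, hi⟩ ⟨-, hj⟩
      exact hij ((hi : f ω = i).symm.trans hj)
    · intro i
      exact hE.inter (hf (measurableSet_singleton i))
  rw [pr, h2, ENNReal.tsum_toReal_eq (fun i => measure_ne_top P _)]
  rfl

lemma pr_split_bool {Ω : Type*} [MeasurableSpace Ω] (P : Measure Ω) [IsFiniteMeasure P]
    {C : Set Ω} (hC : MeasurableSet C) {D : Ω → Bool} (hD : Measurable D) :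
    pr P ({ω | D ω = true} ∩ C) + pr P ({ω | D ω = false} ∩ C) = pr P C := by
  have hU : ({ω | D ω = true} ∩ C) ∪ ({ω | D ω = false} ∩ C) = C := by
    ext ω
    cases hω : D ω <;>
      simp [Set.mem_inter_iff, Set.mem_setOf_eq, hω]
  have hdisj : Disjoint ({ω | D ω = true} ∩ C) ({ω | D ω = false} ∩ C) := by
    refine Set.disjoint_left.2 ?_
    rintro ω ⟨h1, -⟩ ⟨h2, -⟩
    rw [Set.mem_setOf_eq] at h1 h2
    rw [h1] at h2
    exact Bool.noConfusion h2
  have h2 : P ({ω | D ω = true} ∩ C) + P ({ω | D ω = false} ∩ C) = P C := by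
    conv_rhs => rw [← hU]
    exact (measure_union hdisj ((hD (measurableSet_singleton false)).inter hC)).symm
  rw [pr, pr, pr, ← ENNReal.toReal_add (measure_ne_top _ _) (measure_ne_top _ _), h2]

/-- under consistency, ignorability, and positivity, the group-specific
counterfactual false negative rate is identified by the group-restricted
inverse-probability-weighted ratio:
`P(S=0 | Y⁰=1, A=a) = E[1{D=0}·1{S=0}·1{Y=1}·1{A=a}/(1−π(A,X,S))] /
  E[1{D=0}·1{Y=1}·1{A=a}/(1−π(A,X,S))]`,
where `π(a,x,s) = P(D=1 | A=a, X=x, S=s)`, the expectations are series over the level sets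
`(x, s)` of `(X, S)` with `A = a` fixed (the indicator `1{S=0}` is encoded by also requiring
`S ω = false` in the event), and the denominator is strictly positive since it equals
`P(Y⁰=1, A=a)`. Binary variables are modelled as `Bool`-valued, with `1 = true`, `0 = false`. -/
theorem stmt_15
    {Ω 𝒜 𝒳 : Type*} [MeasurableSpace Ω]
    [MeasurableSpace 𝒜] [MeasurableSingletonClass 𝒜] [Countable 𝒜] [Nonempty 𝒜]
    [MeasurableSpace 𝒳] [MeasurableSingletonClass 𝒳] [Countable 𝒳] [Nonempty 𝒳]
    (P : Measure Ω) [IsProbabilityMeasure P]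
    (Y0 Y D S : Ω → Bool) (A : Ω → 𝒜) (X : Ω → 𝒳)
    (hY0 : Measurable Y0) (hY : Measurable Y) (hD : Measurable D) (hS : Measurable S)
    (hA : Measurable A) (hX : Measurable X)
    (a : 𝒜)
    (hpos : 0 < pr P {ω | Y0 ω = true ∧ A ω = a})
    (hcons : ∀ᵐ ω ∂P, D ω = false → Y ω = Y0 ω)
    (hig : ∀ (a' : 𝒜) (x : 𝒳) (s y d : Bool),
      0 < pr P {ω | A ω = a' ∧ X ω = x ∧ S ω = s} →
      cpr P {ω | Y0 ω = y ∧ D ω = d} {ω | A ω = a' ∧ X ω = x ∧ S ω = s} =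
        cpr P {ω | Y0 ω = y} {ω | A ω = a' ∧ X ω = x ∧ S ω = s} *
          cpr P {ω | D ω = d} {ω | A ω = a' ∧ X ω = x ∧ S ω = s})
    (hposD : ∀ (a' : 𝒜) (x : 𝒳) (s : Bool),
      0 < pr P {ω | A ω = a' ∧ X ω = x ∧ S ω = s} →
      0 < pr P {ω | D ω = false ∧ A ω = a' ∧ X ω = x ∧ S ω = s}) :
    0 < (∑' (x : 𝒳) (s : Bool),
          pr P {ω | D ω = false ∧ Y ω = true ∧ A ω = a ∧ X ω = x ∧ S ω = s} /
            (1 - cpr P {ω | D ω = true} {ω | A ω = a ∧ X ω = x ∧ S ω = s})) ∧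
    (∑' (x : 𝒳) (s : Bool),
        pr P {ω | D ω = false ∧ Y ω = true ∧ A ω = a ∧ X ω = x ∧ S ω = s} /
          (1 - cpr P {ω | D ω = true} {ω | A ω = a ∧ X ω = x ∧ S ω = s})) =
      pr P {ω | Y0 ω = true ∧ A ω = a} ∧
    cpr P {ω | S ω = false} {ω | Y0 ω = true ∧ A ω = a} =
      (∑' (x : 𝒳) (s : Bool),
          pr P {ω | D ω = false ∧ S ω = false ∧ Y ω = true ∧ A ω = a ∧ X ω = x ∧ S ω = s} /
            (1 - cpr P {ω | D ω = true} {ω | A ω = a ∧ X ω = x ∧ S ω = s})) /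
        (∑' (x : 𝒳) (s : Bool),
            pr P {ω | D ω = false ∧ Y ω = true ∧ A ω = a ∧ X ω = x ∧ S ω = s} /
              (1 - cpr P {ω | D ω = true} {ω | A ω = a ∧ X ω = x ∧ S ω = s})) := by
  -- the per-cell identification
  have key : ∀ (x : 𝒳) (s : Bool),
      pr P {ω | D ω = false ∧ Y ω = true ∧ A ω = a ∧ X ω = x ∧ S ω = s} /
        (1 - cpr P {ω | D ω = true} {ω | A ω = a ∧ X ω = x ∧ S ω = s}) =
      pr P {ω | Y0 ω = true ∧ A ω = a ∧ X ω = x ∧ S ω = s} := by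
    intro x s
    by_cases h0 : pr P {ω | A ω = a ∧ X ω = x ∧ S ω = s} = 0
    · have hn : pr P {ω | D ω = false ∧ Y ω = true ∧ A ω = a ∧ X ω = x ∧ S ω = s} = 0 :=
        pr_zero_of_subset P (fun ω h => h.2.2) h0
      have hr : pr P {ω | Y0 ω = true ∧ A ω = a ∧ X ω = x ∧ S ω = s} = 0 :=
        pr_zero_of_subset P (fun ω h => h.2) h0
      rw [hn, hr, zero_div]
    · have hCm : MeasurableSet {ω | A ω = a ∧ X ω = x ∧ S ω = s} :=
        (hA (measurableSet_singleton a)).inter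
          ((hX (measurableSet_singleton x)).inter (hS (measurableSet_singleton s)))
      have hCpos : 0 < pr P {ω | A ω = a ∧ X ω = x ∧ S ω = s} :=
        lt_of_le_of_ne (pr_nonneg P _) (Ne.symm h0)
      have e1 : {ω | D ω = false ∧ A ω = a ∧ X ω = x ∧ S ω = s} =
          {ω | D ω = false} ∩ {ω | A ω = a ∧ X ω = x ∧ S ω = s} := by
        ext ω; simp only [Set.mem_inter_iff, Set.mem_setOf_eq]
      have hdpos : 0 < pr P ({ω | D ω = false} ∩ {ω | A ω = a ∧ X ω = x ∧ S ω = s}) := by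
        rw [← e1]; exact hposD a x s hCpos
      have hsplit := pr_split_bool P hCm hD
      have hden : 1 - cpr P {ω | D ω = true} {ω | A ω = a ∧ X ω = x ∧ S ω = s} =
          pr P ({ω | D ω = false} ∩ {ω | A ω = a ∧ X ω = x ∧ S ω = s}) /
            pr P {ω | A ω = a ∧ X ω = x ∧ S ω = s} := by
        rw [cpr]
        field_simp
        linarith
      have hYY0 : pr P {ω | D ω = false ∧ Y ω = true ∧ A ω = a ∧ X ω = x ∧ S ω = s} =
          pr P ({ω | Y0 ω = true ∧ D ω = false} ∩ {ω | A ω = a ∧ X ω = x ∧ S ω = s}) := by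
        unfold pr
        congr 1
        apply measure_congr
        rw [Filter.eventuallyEq_set]
        filter_upwards [hcons] with ω hω
        simp only [Set.mem_setOf_eq, Set.mem_inter_iff]
        constructor
        · rintro ⟨h1, h2, h3⟩
          exact ⟨⟨by rw [← hω h1]; exact h2, h1⟩, h3⟩
        · rintro ⟨⟨h2, h1⟩, h3⟩
          exact ⟨h1, by rw [hω h1]; exact h2, h3⟩
      have higc := hig a x s true false hCpos
      rw [cpr, cpr, cpr] at higc
      have e3 : {ω | Y0 ω = true ∧ A ω = a ∧ X ω = x ∧ S ω = s} =
          {ω | Y0 ω = true} ∩ {ω | A ω = a ∧ X ω = x ∧ S ω = s} := by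
        ext ω; simp only [Set.mem_inter_iff, Set.mem_setOf_eq]
      have hC0 : pr P {ω | A ω = a ∧ X ω = x ∧ S ω = s} ≠ 0 := ne_of_gt hCpos
      have hd0 : pr P ({ω | D ω = false} ∩ {ω | A ω = a ∧ X ω = x ∧ S ω = s}) ≠ 0 :=
        ne_of_gt hdpos
      have hnc : pr P ({ω | Y0 ω = true ∧ D ω = false} ∩ {ω | A ω = a ∧ X ω = x ∧ S ω = s}) *
          pr P {ω | A ω = a ∧ X ω = x ∧ S ω = s} =
          pr P ({ω | Y0 ω = true} ∩ {ω | A ω = a ∧ X ω = x ∧ S ω = s}) *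
          pr P ({ω | D ω = false} ∩ {ω | A ω = a ∧ X ω = x ∧ S ω = s}) := by
        field_simp at higc
        exact mul_right_cancel₀ hC0 (by linear_combination pr P {ω | A ω = a ∧ X ω = x ∧ S ω = s} * higc)
      rw [hYY0, hden, e3, div_div_eq_mul_div, div_eq_iff hd0]
      linarith [hnc]
    -- end key
  have key2 : ∀ (x : 𝒳) (s : Bool),
      pr P {ω | D ω = false ∧ S ω = false ∧ Y ω = true ∧ A ω = a ∧ X ω = x ∧ S ω = s} /
        (1 - cpr P {ω | D ω = true} {ω | A ω = a ∧ X ω = x ∧ S ω = s}) =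
      pr P {ω | S ω = false ∧ Y0 ω = true ∧ A ω = a ∧ X ω = x ∧ S ω = s} := by
    intro x s
    cases s with
    | false =>
      have e1 : {ω | D ω = false ∧ S ω = false ∧ Y ω = true ∧ A ω = a ∧ X ω = x ∧ S ω = false} =
          {ω | D ω = false ∧ Y ω = true ∧ A ω = a ∧ X ω = x ∧ S ω = false} := by
        ext ω; simp only [Set.mem_setOf_eq]; tauto
      have e2 : {ω | S ω = false ∧ Y0 ω = true ∧ A ω = a ∧ X ω = x ∧ S ω = false} =
          {ω | Y0 ω = true ∧ A ω = a ∧ X ω = x ∧ S ω = false} := by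
        ext ω; simp only [Set.mem_setOf_eq]; tauto
      rw [e1, e2]
      exact key x false
    | true =>
      have e1 : {ω | D ω = false ∧ S ω = false ∧ Y ω = true ∧ A ω = a ∧ X ω = x ∧ S ω = true} =
          (∅ : Set Ω) := by
        ext ω; simp only [Set.mem_setOf_eq, Set.mem_empty_iff_false, iff_false]
        rintro ⟨-, h1, -, -, -, h2⟩; rw [h1] at h2; exact Bool.noConfusion h2
      have e2 : {ω | S ω = false ∧ Y0 ω = true ∧ A ω = a ∧ X ω = x ∧ S ω = true} =
          (∅ : Set Ω) := by
        ext ω; simp only [Set.mem_setOf_eq, Set.mem_empty_iff_false, iff_false]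
        rintro ⟨h1, -, -, -, h2⟩; rw [h1] at h2; exact Bool.noConfusion h2
      rw [e1, e2]
      simp [pr]
  -- summing
  have hBm : MeasurableSet {ω | Y0 ω = true ∧ A ω = a} :=
    (hY0 (measurableSet_singleton true)).inter (hA (measurableSet_singleton a))
  have hB'm : MeasurableSet {ω | S ω = false ∧ Y0 ω = true ∧ A ω = a} :=
    (hS (measurableSet_singleton false)).inter
      ((hY0 (measurableSet_singleton true)).inter (hA (measurableSet_singleton a)))
  have hden : (∑' (x : 𝒳) (s : Bool),
      pr P {ω | D ω = false ∧ Y ω = true ∧ A ω = a ∧ X ω = x ∧ S ω = s} /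
        (1 - cpr P {ω | D ω = true} {ω | A ω = a ∧ X ω = x ∧ S ω = s})) =
      pr P {ω | Y0 ω = true ∧ A ω = a} := by
    rw [pr_partition P hBm hX]
    refine tsum_congr fun x => ?_
    rw [pr_partition P (show MeasurableSet ({ω | Y0 ω = true ∧ A ω = a} ∩ {ω | X ω = x}) from
      hBm.inter (hX (measurableSet_singleton x))) hS]
    refine tsum_congr fun s => ?_
    rw [key x s]
    congr 1
    ext ω
    simp only [Set.mem_inter_iff, Set.mem_setOf_eq]
    tauto
  have hnum : (∑' (x : 𝒳) (s : Bool),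
      pr P {ω | D ω = false ∧ S ω = false ∧ Y ω = true ∧ A ω = a ∧ X ω = x ∧ S ω = s} /
        (1 - cpr P {ω | D ω = true} {ω | A ω = a ∧ X ω = x ∧ S ω = s})) =
      pr P {ω | S ω = false ∧ Y0 ω = true ∧ A ω = a} := by
    rw [pr_partition P hB'm hX]
    refine tsum_congr fun x => ?_
    rw [pr_partition P (show MeasurableSet ({ω | S ω = false ∧ Y0 ω = true ∧ A ω = a} ∩
      {ω | X ω = x}) from hB'm.inter (hX (measurableSet_singleton x))) hS]
    refine tsum_congr fun s => ?_
    rw [key2 x s]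
    congr 1
    ext ω
    simp only [Set.mem_inter_iff, Set.mem_setOf_eq]
    tauto
  refine ⟨by rw [hden]; exact hpos, hden, ?_⟩
  rw [hnum, hden, cpr]
  have hfin : {ω | S ω = false} ∩ {ω | Y0 ω = true ∧ A ω = a} =
      {ω | S ω = false ∧ Y0 ω = true ∧ A ω = a} := by
    ext ω
    simp only [Set.mem_inter_iff, Set.mem_setOf_eq]
  rw [hfin]
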